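/- Let γ ∈ (0, 1/2] and set M := Ī − γ𝐐'. Then M is symmetric, and for every integer τ ≥ 1 its spectral norm satisfies ‖M^τ‖ = (1 − γ(1 − λ₂))^τ. -/

import Mathlib

open Matrix Finset
open scoped Kronecker Matrix.Norms.L2Operator

noncomputable section

/-- The `nd × nd` averaging matrix `(1/n)(1ₙ1ₙᵀ ⊗ I_d)`. -/
def avgMat (n d : ℕ) : Matrix (Fin n × Fin d) (Fin n × Fin d) ℝ :=
  ((n : ℝ)⁻¹ • Matrix.of fun _ _ : Fin n => (1 : ℝ)) ⊗ₖ (1 : Matrix (Fin d) (Fin d) ℝ)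

/-- `Ī := I_{nd} − (1/n)(1ₙ1ₙᵀ ⊗ I_d)`. -/
def Ibar (n d : ℕ) : Matrix (Fin n × Fin d) (Fin n × Fin d) ℝ :=
  1 - avgMat n d

/-- `𝐐' := (Iₙ − Q) ⊗ I_d`. -/
def Qprime {n : ℕ} (Q : Matrix (Fin n) (Fin n) ℝ) (d : ℕ) :
    Matrix (Fin n × Fin d) (Fin n × Fin d) ℝ :=
  (1 - Q) ⊗ₖ (1 : Matrix (Fin d) (Fin d) ℝ)

lemma l2_opNorm_diagonal_eq {m : Type*} [Fintype m] [DecidableEq m]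
    (v : m → ℝ) (C : ℝ) (hC : 0 ≤ C) (hbd : ∀ i, |v i| ≤ C) (hex : ∃ i, |v i| = C) :
    ‖(Matrix.diagonal v : Matrix m m ℝ)‖ = C := by
  refine le_antisymm ?_ ?_
  · rw [Matrix.l2_opNorm_def]
    refine ContinuousLinearMap.opNorm_le_bound _ hC fun x => ?_
    simp only [LinearEquiv.trans_apply, LinearMap.coe_toContinuousLinearMap',
      Matrix.toEuclideanLin_apply]
    rw [EuclideanSpace.norm_eq, EuclideanSpace.norm_eq]
    rw [show C * Real.sqrt (∑ i, ‖x i‖ ^ 2) = Real.sqrt (C ^ 2 * ∑ i, ‖x i‖ ^ 2) by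
      rw [Real.sqrt_mul (by positivity), Real.sqrt_sq hC]]
    apply Real.sqrt_le_sqrt
    rw [Finset.mul_sum]
    apply Finset.sum_le_sum
    intro i _
    simp only [Matrix.mulVec_diagonal, Real.norm_eq_abs, abs_mul,
      mul_pow]
    have h1 : |v i| ^ 2 ≤ C ^ 2 := pow_le_pow_left₀ (abs_nonneg _) (hbd i) 2
    have h2 : (WithLp.equiv 2 (m → ℝ)) x i = x i := rfl
    nlinarith [sq_nonneg (x i), sq_abs (x i), sq_nonneg (|x i|)]
  · obtain ⟨i, hi⟩ := hex
    have h := Matrix.l2_opNorm_mulVec (Matrix.diagonal v) (EuclideanSpace.single i (1:ℝ))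
    have hx : ‖EuclideanSpace.single i (1:ℝ)‖ = 1 := by
      rw [EuclideanSpace.norm_single]; norm_num
    have hmv : (Matrix.diagonal v) *ᵥ ((WithLp.equiv 2 (m → ℝ)) (EuclideanSpace.single i (1:ℝ)))
        = Pi.single i (v i) := by
      have h3 : ((WithLp.equiv 2 (m → ℝ)) (EuclideanSpace.single i (1:ℝ))) = Pi.single i 1 :=
        rfl
      rw [h3]
      simpa using Matrix.diagonal_mulVec_single v i 1
    rw [hx, mul_one] at h
    calc C = ‖(EuclideanSpace.equiv m ℝ).symm ((Matrix.diagonal v) *ᵥ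
          (EuclideanSpace.single i (1:ℝ)))‖ := by
          rw [show ((Matrix.diagonal v) *ᵥ (EuclideanSpace.single i (1:ℝ)) : m → ℝ)
              = Pi.single i (v i) from hmv]
          rw [show ((EuclideanSpace.equiv m ℝ).symm (Pi.single i (v i)))
              = EuclideanSpace.single i (v i) from rfl]
          rw [EuclideanSpace.norm_single, Real.norm_eq_abs, hi]
      _ ≤ ‖(Matrix.diagonal v : Matrix m m ℝ)‖ := h

/-- Let `γ ∈ (0, 1/2]` and set `M := Ī − γ𝐐'`.  Then `M` is symmetric,
and for every integer `τ ≥ 1` its spectral norm satisfies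
`‖M^τ‖ = (1 − γ(1 − λ₂))^τ`. -/
theorem spectral_norm_Mpow {n d : ℕ} (hn : 2 ≤ n) (hd : 1 ≤ d)
    (Q : Matrix (Fin n) (Fin n) ℝ)
    (hQsymm : Q.IsSymm)
    (hQnonneg : ∀ i j, 0 ≤ Q i j)
    (hQrow : ∀ i, ∑ j, Q i j = 1)
    (hQcol : ∀ j, ∑ i, Q i j = 1)
    (hQherm : Q.IsHermitian)
    (hQsorted : ∀ i j : Fin n, i ≤ j → hQherm.eigenvalues j ≤ hQherm.eigenvalues i)
    (hQeig1 : hQherm.eigenvalues ⟨0, by omega⟩ = 1)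
    (hQeig2 : hQherm.eigenvalues ⟨1, by omega⟩ < 1)
    (hQeign : -1 < hQherm.eigenvalues ⟨n - 1, by omega⟩)
    (γ : ℝ) (hγ0 : 0 < γ) (hγ1 : γ ≤ 1 / 2) :
    (Ibar n d - γ • Qprime Q d).IsSymm ∧
      ∀ τ : ℕ, 1 ≤ τ →
        ‖(Ibar n d - γ • Qprime Q d) ^ τ‖ =
          (1 - γ * (1 - hQherm.eigenvalues ⟨1, by omega⟩)) ^ τ := by
  have hn0 : 0 < n := by omega
  haveI : Nonempty (Fin n) := ⟨⟨0, hn0⟩⟩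
  haveI : Nonempty (Fin d) := ⟨⟨0, by omega⟩⟩
  have hncast : (n : ℝ) ≠ 0 := Nat.cast_ne_zero.mpr (by omega)
  set i0 : Fin n := ⟨0, by omega⟩ with hi0def
  set i1 : Fin n := ⟨1, by omega⟩ with hi1def
  set lam : Fin n → ℝ := hQherm.eigenvalues with hlamdef
  set U : Matrix (Fin n) (Fin n) ℝ := ↑(hQherm.eigenvectorUnitary) with hUdef
  have hUmem : U ∈ unitary (Matrix (Fin n) (Fin n) ℝ) := hQherm.eigenvectorUnitary.2
  have hUU : star U * U = 1 := (Unitary.mem_iff.mp hUmem).1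
  have hUU' : U * star U = 1 := (Unitary.mem_iff.mp hUmem).2
  set c : Fin n → ℝ := fun i => ∑ k, U k i with hcdef
  -- eigen-equation summed: λᵢ cᵢ = cᵢ
  have hlamc : ∀ i, lam i * c i = c i := by
    intro i
    have hveq : (fun l => U l i) = ⇑(hQherm.eigenvectorBasis i) := by
      funext l; rfl
    have hev : Q *ᵥ (fun l => U l i) = fun k => lam i * U k i := by
      rw [hveq, hQherm.mulVec_eigenvectorBasis i]
      rfl
    calc lam i * c i = ∑ k, lam i * U k i := by rw [hcdef, Finset.mul_sum]
      _ = ∑ k, (Q *ᵥ (fun l => U l i)) k := by rw [hev]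
      _ = ∑ k, ∑ l, Q k l * U l i := by simp [Matrix.mulVec, dotProduct]
      _ = ∑ l, (∑ k, Q k l) * U l i := by rw [Finset.sum_comm]; simp [Finset.sum_mul]
      _ = ∑ l, U l i := by simp [hQcol]
      _ = c i := rfl
  have h1le : ∀ i : Fin n, i ≠ i0 → i1 ≤ i := by
    intro i hi
    have hv : i.val ≠ 0 := fun h => hi (Fin.ext h)
    rw [Fin.le_def]
    exact (show (1:ℕ) ≤ i.val by omega)
  have hlamlt : ∀ i : Fin n, i ≠ i0 → lam i ≤ lam i1 := fun i hi => hQsorted i1 i (h1le i hi)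
  have hlamgt : ∀ i : Fin n, -1 < lam i := by
    intro i
    have hle : i ≤ (⟨n - 1, by omega⟩ : Fin n) := by
      rw [Fin.le_def]
      exact (show i.val ≤ n - 1 by have := i.isLt; omega)
    exact lt_of_lt_of_le hQeign (hQsorted i ⟨n - 1, by omega⟩ hle)
  have hczero : ∀ i, i ≠ i0 → c i = 0 := by
    intro i hi
    have hlt : lam i < 1 := lt_of_le_of_lt (hlamlt i hi) hQeig2
    have h := hlamc i
    have h2 : (lam i - 1) * c i = 0 := by rw [sub_mul, h, one_mul, sub_self]
    rcases mul_eq_zero.mp h2 with h' | h'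
    · exact absurd h' (by intro h''; linarith)
    · exact h'
  -- sum of squares of c is n
  have hsum : ∑ i, c i * c i = (n : ℝ) := by
    have step : ∀ k l, ∑ i, U k i * U l i = (1 : Matrix (Fin n) (Fin n) ℝ) k l := by
      intro k l
      have h4 : (U * star U) k l = ∑ i, U k i * U l i := by
        rw [Matrix.mul_apply]
        refine Finset.sum_congr rfl fun i _ => ?_
        simp [Matrix.star_apply]
      rw [← hUU', h4]
    calc ∑ i, c i * c i = ∑ i, ∑ k, ∑ l, U k i * U l i := by
          refine Finset.sum_congr rfl fun i _ => ?_
          rw [Finset.sum_mul_sum]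
      _ = ∑ k, ∑ i, ∑ l, U k i * U l i := Finset.sum_comm
      _ = ∑ k, ∑ l, ∑ i, U k i * U l i := by
          refine Finset.sum_congr rfl fun k _ => Finset.sum_comm
      _ = ∑ k, ∑ l, (1 : Matrix (Fin n) (Fin n) ℝ) k l := by
          refine Finset.sum_congr rfl fun k _ => Finset.sum_congr rfl fun l _ => step k l
      _ = (n : ℝ) := by simp [Matrix.one_apply]
  have hc0 : c i0 * c i0 = (n : ℝ) := by
    rw [← hsum]
    symm
    apply Finset.sum_eq_single i0
    · intro i _ hi; rw [hczero i hi]; ring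
    · intro h; exact absurd (Finset.mem_univ i0) h
  set J : Matrix (Fin n) (Fin n) ℝ := Matrix.of fun _ _ => (1 : ℝ) with hJdef
  have hJU : star U * J * U = Matrix.diagonal (fun i => if i = i0 then (n : ℝ) else 0) := by
    ext i j
    have hrow : ∀ l, (star U * J) i l = c i := by
      intro l
      rw [Matrix.mul_apply]
      simp [Matrix.star_apply, hJdef, hcdef]
    rw [Matrix.mul_apply]
    simp_rw [hrow]
    rw [← Finset.mul_sum]
    rw [show (∑ l, U l j) = c j from rfl]
    by_cases hij : i = j
    · subst hij
      by_cases hi : i = i0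
      · subst hi; simpa [Matrix.diagonal_apply_eq] using hc0
      · rw [hczero i hi, zero_mul]; simp [Matrix.diagonal_apply_eq, hi]
    · rw [Matrix.diagonal_apply_ne _ hij]
      by_cases hi : i = i0
      · have hj : j ≠ i0 := fun h => hij (hi.trans h.symm)
        rw [hczero j hj, mul_zero]
      · rw [hczero i hi, zero_mul]
  have hQU : star U * Q * U = Matrix.diagonal lam := by
    have h := hQherm.conjStarAlgAut_star_eigenvectorUnitary
    rw [Unitary.conjStarAlgAut_star_apply] at h
    rw [show (RCLike.ofReal ∘ hQherm.eigenvalues : Fin n → ℝ) = lam by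
      funext i; simp [RCLike.ofReal_real_eq_id, hlamdef]] at h
    exact h
  set μ : Fin n → ℝ := fun i => if i = i0 then 0 else 1 - γ * (1 - lam i) with hμdef
  set B : Matrix (Fin n) (Fin n) ℝ := 1 - (n : ℝ)⁻¹ • J - γ • (1 - Q) with hBdef
  have hdiagmu : Matrix.diagonal μ =
      1 - (n : ℝ)⁻¹ • Matrix.diagonal (fun i => if i = i0 then (n : ℝ) else 0)
        - γ • (1 - Matrix.diagonal lam) := by
    ext i j
    by_cases hij : i = j
    · subst hij
      simp only [Matrix.sub_apply, Matrix.smul_apply, Matrix.one_apply_eq,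
        Matrix.diagonal_apply_eq, smul_eq_mul]
      by_cases hi : i = i0
      · simp only [hμdef, hi, if_pos rfl]
        rw [show lam i0 = 1 from hQeig1]
        field_simp
        simp
      · simp only [hμdef, if_neg hi]
        ring
    · simp [Matrix.diagonal_apply_ne _ hij, Matrix.one_apply_ne hij]
  have hconjJ : U * Matrix.diagonal (fun i => if i = i0 then (n : ℝ) else 0) * star U = J := by
    rw [← hJU]
    have e : U * (star U * J * U) * star U = (U * star U) * J * (U * star U) := by
      simp only [mul_assoc]
    rw [e, hUU', one_mul, mul_one]
  have hconjQ : U * Matrix.diagonal lam * star U = Q := by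
    rw [← hQU]
    have e : U * (star U * Q * U) * star U = (U * star U) * Q * (U * star U) := by
      simp only [mul_assoc]
    rw [e, hUU', one_mul, mul_one]
  have hB : B = U * Matrix.diagonal μ * star U := by
    rw [hdiagmu]
    simp only [mul_sub, sub_mul, Matrix.mul_smul, Matrix.smul_mul, mul_one, one_mul]
    rw [hconjJ, hconjQ, hUU']
  -- B is symmetric
  have hJsymm : Jᵀ = J := by ext i j; rfl
  have hBsymm : Bᵀ = B := by
    rw [hBdef]
    simp only [Matrix.transpose_sub, Matrix.transpose_smul, Matrix.transpose_one, hJsymm]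
    rw [hQsymm.eq]
  -- M = B ⊗ₖ 1
  have hM : Ibar n d - γ • Qprime Q d = B ⊗ₖ (1 : Matrix (Fin d) (Fin d) ℝ) := by
    ext ⟨i, j⟩ ⟨k, l⟩
    simp only [Ibar, avgMat, Qprime, hBdef, hJdef, Matrix.sub_apply, Matrix.smul_apply,
      Matrix.kroneckerMap_apply, Matrix.one_apply, Matrix.of_apply, smul_eq_mul,
      Prod.mk.injEq]
    by_cases hik : i = k <;> by_cases hjl : j = l <;>
      simp [hik, hjl] <;> ring
  -- W := U ⊗ₖ 1 is unitary
  set W : Matrix (Fin n × Fin d) (Fin n × Fin d) ℝ := U ⊗ₖ (1 : Matrix (Fin d) (Fin d) ℝ)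
    with hWdef
  have hstarW : star W = (star U) ⊗ₖ (1 : Matrix (Fin d) (Fin d) ℝ) := by
    ext ⟨i, j⟩ ⟨k, l⟩
    simp only [hWdef, Matrix.star_apply, Matrix.kroneckerMap_apply, Matrix.one_apply,
      star_trivial, mul_ite, mul_one, mul_zero]
    by_cases h : j = l
    · subst h; simp
    · simp [h, Ne.symm h]
  have hWmem : W ∈ unitary (Matrix (Fin n × Fin d) (Fin n × Fin d) ℝ) := by
    rw [Unitary.mem_iff]
    constructor
    · rw [hstarW, hWdef, ← Matrix.mul_kronecker_mul, hUU, one_mul, Matrix.one_kronecker_one]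
    · rw [hstarW, hWdef, ← Matrix.mul_kronecker_mul, hUU', one_mul, Matrix.one_kronecker_one]
  have hpow : ∀ τ : ℕ, (B ⊗ₖ (1 : Matrix (Fin d) (Fin d) ℝ)) ^ τ
      = (B ^ τ) ⊗ₖ (1 : Matrix (Fin d) (Fin d) ℝ) := by
    intro τ
    induction τ with
    | zero => rw [pow_zero, pow_zero, Matrix.one_kronecker_one]
    | succ k ih => rw [pow_succ, pow_succ, ih, ← Matrix.mul_kronecker_mul, one_mul]
  have hBpow : ∀ τ : ℕ, B ^ τ = U * Matrix.diagonal (fun i => μ i ^ τ) * star U := by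
    intro τ
    induction τ with
    | zero =>
      rw [pow_zero]
      have : (fun i : Fin n => μ i ^ 0) = fun _ => (1 : ℝ) := by funext i; rw [pow_zero]
      rw [this, Matrix.diagonal_one, mul_one, hUU']
    | succ k ih =>
      rw [pow_succ, ih, hB]
      calc U * Matrix.diagonal (fun i => μ i ^ k) * star U * (U * Matrix.diagonal μ * star U)
          = U * (Matrix.diagonal (fun i => μ i ^ k) * ((star U * U) *
              (Matrix.diagonal μ * star U))) := by simp only [mul_assoc]
        _ = U * Matrix.diagonal (fun i => μ i ^ (k + 1)) * star U := by
            rw [hUU, one_mul, ← mul_assoc (Matrix.diagonal _), Matrix.diagonal_mul_diagonal]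
            have hf : (fun i => μ i ^ k * μ i) = fun i => μ i ^ (k + 1) := by
              funext i; rw [pow_succ]
            rw [hf]
            simp only [mul_assoc]
  set β : ℝ := 1 - γ * (1 - lam i1) with hβdef
  have hlam1gt : -1 < lam i1 := hlamgt i1
  have hβpos : 0 < β := by rw [hβdef]; nlinarith
  have hi1ne : i1 ≠ i0 := by
    intro h
    have : (1 : ℕ) = 0 := congrArg Fin.val h
    omega
  have hμbound : ∀ i, |μ i| ≤ β := by
    intro i
    by_cases hi : i = i0
    · rw [hμdef]; simp [hi]; exact hβpos.le
    · have h1 : lam i ≤ lam i1 := hlamlt i hi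
      have h2 : -1 < lam i := hlamgt i
      have h3 : lam i < 1 := lt_of_le_of_lt h1 hQeig2
      have hμi : μ i = 1 - γ * (1 - lam i) := by rw [hμdef]; simp [hi]
      rw [hμi, abs_of_nonneg (by nlinarith)]
      rw [hβdef]
      nlinarith
  have hμ1 : μ i1 = β := by rw [hμdef, hβdef]; simp [hi1ne]
  refine ⟨?_, ?_⟩
  · show (Ibar n d - γ • Qprime Q d)ᵀ = Ibar n d - γ • Qprime Q d
    rw [hM, ← Matrix.kroneckerMap_transpose, hBsymm, Matrix.transpose_one]
  · intro τ hτ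
    have key : (Ibar n d - γ • Qprime Q d) ^ τ
        = W * Matrix.diagonal (fun p : Fin n × Fin d => μ p.1 ^ τ) * star W := by
      rw [hM, hpow, hBpow, hstarW, hWdef]
      have hDkron : (Matrix.diagonal (fun i => μ i ^ τ) ⊗ₖ (1 : Matrix (Fin d) (Fin d) ℝ))
          = Matrix.diagonal (fun p : Fin n × Fin d => μ p.1 ^ τ) := by
        rw [← Matrix.diagonal_one, Matrix.diagonal_kronecker_diagonal]
        simp
      rw [← hDkron, ← Matrix.mul_kronecker_mul, ← Matrix.mul_kronecker_mul, one_mul, one_mul]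
    rw [key]
    rw [CStarRing.norm_mul_mem_unitary _ (Unitary.star_mem hWmem),
      CStarRing.norm_mem_unitary_mul _ hWmem]
    exact l2_opNorm_diagonal_eq _ _ (pow_nonneg hβpos.le τ)
      (fun p => by rw [abs_pow]; exact pow_le_pow_left₀ (abs_nonneg _) (hμbound p.1) τ)
      ⟨(i1, ⟨0, by omega⟩), by rw [abs_pow, hμ1, abs_of_nonneg hβpos.le]⟩
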